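/- Suppose there exist a k-linear abelian rigid monoidal category D with k-bilinear tensor product, finite-dimensional Hom-spaces, objects of finite length, and enough projectives (a multitensor category with enough projectives), and a faithful k-linear monoidal functor E : T → D such that every projective object of D is isomorphic to E(Q) for some Q ∈ T, and for all Q, Q' ∈ T with E(Q), E(Q') projective in D, the map Hom_T(Q, Q') → Hom_D(E(Q), E(Q')) is surjective. Then T is separated: for every nonzero morphism f : X → Y in T there exists a splitting object Q ∈ T with id_Q ⊗ f ≠ 0. -/

import Mathlib

open CategoryTheory CategoryTheory.Limits CategoryTheory.MonoidalCategory

universe v u w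

/-- A morphism `f : X ⟶ Y` is *split* if it is a direct sum of a zero morphism and an
isomorphism; equivalently, if there exists `g : Y ⟶ X` with `f ≫ g ≫ f = f`. -/
def IsSplit {C : Type u} [Category.{v} C] {X Y : C} (f : X ⟶ Y) : Prop :=
  ∃ g : Y ⟶ X, f ≫ g ≫ f = f

/-- An object `R` is a *splitting object* if for every morphism `f : X ⟶ Y` both
`id_R ⊗ f` and `f ⊗ id_R` are split. -/
def IsSplittingObject {C : Type u} [Category.{v} C] [MonoidalCategory C] (R : C) : Prop :=
  ∀ ⦃X Y : C⦄ (f : X ⟶ Y), IsSplit (R ◁ f) ∧ IsSplit (f ▷ R)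

/-- An object `R` is *indecomposable* if it is nonzero and its only idempotent endomorphisms
are `0` and the identity. -/
def IsIndecomposable {C : Type u} [Category.{v} C] [Preadditive C] (R : C) : Prop :=
  ¬ IsZero R ∧ ∀ e : R ⟶ R, e ≫ e = e → e = 0 ∨ e = 𝟙 R

/-- `R` is a direct summand of `S`. -/
def IsDirectSummand {C : Type u} [Category.{v} C] (R S : C) : Prop :=
  ∃ (i : R ⟶ S) (r : S ⟶ R), i ≫ r = 𝟙 R

section AuxRigid

set_option linter.unusedSectionVars false

universe v₃ u₃

variable {D : Type u₃} [Category.{v₃} D] [Preadditive D] [MonoidalCategory D]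
  [MonoidalPreadditive D] [RigidCategory D]

omit [Preadditive D] [MonoidalPreadditive D] in
lemma aux_epi_whiskerLeft (A : D) {X Y : D} (g : X ⟶ Y) [Epi g] : Epi (A ◁ g) := by
  haveI : (tensorLeft A).PreservesEpimorphisms :=
    Functor.preservesEpimorphisms_of_adjunction (tensorLeftAdjunction (ᘁA) A)
  simpa using (tensorLeft A).map_epi g

omit [Preadditive D] [MonoidalPreadditive D] in
lemma aux_mono_whiskerLeft (A : D) {X Y : D} (g : X ⟶ Y) [Mono g] : Mono (A ◁ g) := by
  haveI : (tensorLeft A).PreservesMonomorphisms :=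
    Functor.preservesMonomorphisms_of_adjunction (tensorLeftAdjunction A (Aᘁ))
  simpa using (tensorLeft A).map_mono g

omit [Preadditive D] [MonoidalPreadditive D] in
lemma aux_epi_whiskerRight {X Y : D} (g : X ⟶ Y) [Epi g] (A : D) : Epi (g ▷ A) := by
  haveI : (tensorRight A).PreservesEpimorphisms :=
    Functor.preservesEpimorphisms_of_adjunction (tensorRightAdjunction A (Aᘁ))
  simpa using (tensorRight A).map_epi g

omit [Preadditive D] [MonoidalPreadditive D] in
lemma aux_mono_whiskerRight {X Y : D} (g : X ⟶ Y) [Mono g] (A : D) : Mono (g ▷ A) := by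
  haveI : (tensorRight A).PreservesMonomorphisms :=
    Functor.preservesMonomorphisms_of_adjunction (tensorRightAdjunction (ᘁA) A)
  simpa using (tensorRight A).map_mono g

omit [Preadditive D] [MonoidalPreadditive D] in
lemma aux_projective_tensor_right {P : D} (hP : Projective P) (A : D) : Projective (P ⊗ A) := by
  haveI : (tensorRight (Aᘁ)).PreservesEpimorphisms :=
    Functor.preservesEpimorphisms_of_adjunction (tensorRightAdjunction (Aᘁ) ((Aᘁ)ᘁ))
  simpa using (tensorRightAdjunction A (Aᘁ)).map_projective P hP

omit [Preadditive D] [MonoidalPreadditive D] in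
lemma aux_projective_tensor_left {P : D} (hP : Projective P) (A : D) : Projective (A ⊗ P) := by
  haveI : (tensorLeft (ᘁA)).PreservesEpimorphisms :=
    Functor.preservesEpimorphisms_of_adjunction (tensorLeftAdjunction (ᘁ(ᘁA)) (ᘁA))
  simpa using (tensorLeftAdjunction (ᘁA) A).map_projective P hP

omit [Preadditive D] [MonoidalPreadditive D] in
lemma aux_injective_tensor_left {J : D} (hJ : Injective J) (A : D) : Injective (A ⊗ J) := by
  haveI : (tensorLeft (Aᘁ)).PreservesMonomorphisms :=
    Functor.preservesMonomorphisms_of_adjunction (tensorLeftAdjunction (Aᘁ) ((Aᘁ)ᘁ))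
  simpa using (tensorLeftAdjunction A (Aᘁ)).map_injective J hJ

omit [Preadditive D] [MonoidalPreadditive D] in
lemma aux_injective_tensor_right {J : D} (hJ : Injective J) (A : D) : Injective (J ⊗ A) := by
  haveI : (tensorRight (ᘁA)).PreservesMonomorphisms :=
    Functor.preservesMonomorphisms_of_adjunction (tensorRightAdjunction (ᘁ(ᘁA)) (ᘁA))
  simpa using (tensorRightAdjunction (ᘁA) A).map_injective J hJ

lemma aux_epi_leftAdjointMate {A B : D} (m : A ⟶ B) [Mono m] : Epi (ᘁm) := by
  apply Preadditive.epi_of_cancel_zero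
  intro W t ht
  have h1 : (η_ (ᘁA) A ≫ (t ▷ A)) ≫ (W ◁ m) = 0 := by
    have h2 := coevaluation_comp_leftAdjointMate m =≫ (t ▷ B)
    rw [Category.assoc, Category.assoc, ← comp_whiskerRight, ht,
      MonoidalPreadditive.zero_whiskerRight, comp_zero, whisker_exchange] at h2
    rw [Category.assoc, ← h2]
  haveI := aux_mono_whiskerLeft W m
  have h3 : η_ (ᘁA) A ≫ (t ▷ A) = 0 := zero_of_comp_mono _ h1
  have h4 := tensorRightHomEquiv_symm_coevaluation_comp_whiskerRight (Y := ᘁA) (Y' := A) t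
  rw [h3] at h4
  have h5 : (tensorRightHomEquiv (𝟙_ D) (ᘁA) A W).symm 0 = 0 := by
    simp [tensorRightHomEquiv]
  rw [h5] at h4
  rw [← cancel_epi (λ_ (ᘁA)).hom, comp_zero]
  exact h4.symm

lemma aux_injective_rightDual_of_projective {P : D} (hP : Projective P) : Injective (Pᘁ) := by
  constructor
  intro A B g m hm
  haveI : Mono m := hm
  haveI := aux_epi_leftAdjointMate m
  haveI := hP
  obtain ⟨u, hu⟩ : ∃ u : P ⟶ (ᘁB), u ≫ (ᘁm) = (ᘁg) :=
    ⟨Projective.factorThru (ᘁg) (ᘁm), Projective.factorThru_comp _ _⟩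
  refine ⟨(uᘁ : B ⟶ Pᘁ), ?_⟩
  have hR : ((uᘁ) ▷ P) ≫ ε_ P (Pᘁ) = (B ◁ u) ≫ ε_ (ᘁB) B :=
    rightAdjointMate_comp_evaluation u
  have hL1 : ((A : D) ◁ (ᘁm)) ≫ ε_ (ᘁA) A = (m ▷ (ᘁB)) ≫ ε_ (ᘁB) B :=
    leftAdjointMate_comp_evaluation m
  have hL2 : ((A : D) ◁ (ᘁg)) ≫ ε_ (ᘁA) A = (g ▷ P) ≫ ε_ P (Pᘁ) :=
    leftAdjointMate_comp_evaluation g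
  have key : ((m ≫ (uᘁ)) ▷ P) ≫ ε_ P (Pᘁ) = (g ▷ P) ≫ ε_ P (Pᘁ) := by
    rw [comp_whiskerRight, Category.assoc, hR, ← Category.assoc, ← whisker_exchange,
      Category.assoc, ← hL1, ← Category.assoc, ← MonoidalCategory.whiskerLeft_comp, hu, hL2]
  have h6 := congrArg (tensorRightHomEquiv A P (Pᘁ) (𝟙_ D)) key
  rw [tensorRightHomEquiv_whiskerRight_comp_evaluation,
    tensorRightHomEquiv_whiskerRight_comp_evaluation] at h6
  rwa [cancel_mono] at h6

lemma aux_mono_coevaluation (P₀ : D) (p : P₀ ⟶ 𝟙_ D) [Epi p] : Mono (η_ P₀ (P₀ᘁ)) := by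
  apply Preadditive.mono_of_cancel_zero
  intro W g hg
  have h1 : (g ▷ P₀) ≫ (η_ P₀ (P₀ᘁ) ▷ P₀) = 0 := by
    rw [← comp_whiskerRight, hg, MonoidalPreadditive.zero_whiskerRight]
  haveI : Mono (η_ P₀ (P₀ᘁ) ▷ P₀) := by
    have h2 := ExactPairing.evaluation_coevaluation P₀ (P₀ᘁ)
    have hmono : Mono ((λ_ P₀).hom ≫ (ρ_ P₀).inv) := inferInstance
    rw [← h2] at hmono
    exact mono_of_mono _ ((α_ _ _ _).hom ≫ P₀ ◁ ε_ P₀ (P₀ᘁ))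
  have h3 : g ▷ P₀ = 0 := zero_of_comp_mono _ h1
  have h4 := whisker_exchange g p
  rw [h3, zero_comp] at h4
  haveI := aux_epi_whiskerLeft W p
  have h5 : g ▷ 𝟙_ D = 0 := zero_of_epi_comp _ h4
  rw [MonoidalCategory.whiskerRight_id] at h5
  simpa [zero_comp, comp_zero] using
    congrArg (fun x => (ρ_ W).inv ≫ x ≫ (ρ_ (𝟙_ D)).hom) h5

lemma aux_split {M I N : D} (e' : M ⟶ I) (m' : I ⟶ N) [Epi e'] [Mono m']
    (h1 : Projective I) (h2 : Injective I) :
    ∃ h : N ⟶ M, (e' ≫ m') ≫ h ≫ (e' ≫ m') = e' ≫ m' := by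
  haveI := h1; haveI := h2
  refine ⟨Injective.factorThru (𝟙 I) m' ≫ Projective.factorThru (𝟙 I) e', ?_⟩
  have hs : Projective.factorThru (𝟙 I) e' ≫ e' = 𝟙 I := Projective.factorThru_comp _ _
  have hr : m' ≫ Injective.factorThru (𝟙 I) m' = 𝟙 I := Injective.comp_factorThru _ _
  calc (e' ≫ m') ≫ (Injective.factorThru (𝟙 I) m' ≫ Projective.factorThru (𝟙 I) e') ≫
        (e' ≫ m')
      = e' ≫ (m' ≫ Injective.factorThru (𝟙 I) m') ≫
        (Projective.factorThru (𝟙 I) e' ≫ e') ≫ m' := by simp only [Category.assoc]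
    _ = e' ≫ m' := by rw [hs, hr]; simp

end AuxRigid

section

variable {k : Type w} [Field k] [IsAlgClosed k]
variable {C : Type u} [Category.{v} C] [Preadditive C] [Linear k C]
  [MonoidalCategory C] [MonoidalPreadditive C] [MonoidalLinear k C]
  [RigidCategory C] [IsIdempotentComplete C]
  [HasFiniteBiproducts C] [HasBinaryBiproducts C]
  [∀ X Y : C, FiniteDimensional k (X ⟶ Y)]

universe v₂ u₂

/-- Suppose there exist a multitensor category `D` with enough projectives and a faithful
`k`-linear monoidal functor `E : T ⥤ D` such that every projective object of `D` is (up to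
isomorphism) of the form `E(Q)`, and `E` is full on objects with projective image. Then `T`
is separated: for every nonzero morphism `f : X ⟶ Y` in `T` there is a splitting object `Q`
with `id_Q ⊗ f ≠ 0`. -/
theorem separated_of_faithful_functor_full_on_projectives
    {D : Type u₂} [Category.{v₂} D] [Abelian D] [Linear k D]
    [MonoidalCategory D] [MonoidalPreadditive D] [MonoidalLinear k D]
    [RigidCategory D] [∀ X Y : D, FiniteDimensional k (X ⟶ Y)]
    [EnoughProjectives D]
    (hNoeth : ∀ X : D, IsNoetherianObject X) (hArt : ∀ X : D, IsArtinianObject X)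
    (E : C ⥤ D) [E.Monoidal] [E.Faithful] [E.Additive] [E.Linear k]
    (hProjSurj : ∀ P : D, Projective P → ∃ Q : C, Nonempty (E.obj Q ≅ P))
    (hProjFull : ∀ Q Q' : C, Projective (E.obj Q) → Projective (E.obj Q') →
      Function.Surjective (fun g : Q ⟶ Q' => E.map g))
    {X Y : C} (f : X ⟶ Y) (hf : f ≠ 0) :
    ∃ Q : C, IsSplittingObject Q ∧ Q ◁ f ≠ 0 := by
  classical
  -- the projective-injective object `Pd` in `D`
  set P₀ : D := Projective.over (𝟙_ D) with hP₀
  set Pd : D := P₀ ⊗ (P₀ᘁ) with hPd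
  have hP₀proj : Projective P₀ := Projective.projective_over _
  have hPdproj : Projective Pd := aux_projective_tensor_right hP₀proj _
  have hPdinj : Injective Pd :=
    aux_injective_tensor_left (aux_injective_rightDual_of_projective hP₀proj) _
  haveI hmonoη : Mono (η_ P₀ (P₀ᘁ)) := aux_mono_coevaluation P₀ (Projective.π _)
  obtain ⟨Q, ⟨e⟩⟩ := hProjSurj Pd hPdproj
  -- transport isomorphisms
  let u : ∀ A : C, E.obj (Q ⊗ A) ≅ Pd ⊗ E.obj A := fun A =>
    (Functor.Monoidal.μIso E Q A).symm ≪≫ whiskerRightIso e (E.obj A)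
  let v : ∀ A : C, E.obj (A ⊗ Q) ≅ E.obj A ⊗ Pd := fun A =>
    (Functor.Monoidal.μIso E A Q).symm ≪≫ whiskerLeftIso (E.obj A) e
  have keyL : ∀ {A B : C} (g : A ⟶ B),
      E.map (Q ◁ g) = (u A).hom ≫ (Pd ◁ E.map g) ≫ (u B).inv := by
    intro A B g
    have h1 : E.obj Q ◁ E.map g ≫ Functor.LaxMonoidal.μ E Q B =
        Functor.LaxMonoidal.μ E Q A ≫ E.map (Q ◁ g) :=
      Functor.LaxMonoidal.μ_natural_right (F := E) Q g
    have h2 : (e.hom ▷ E.obj A) ≫ (Pd ◁ E.map g) ≫ (e.inv ▷ E.obj B) =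
        E.obj Q ◁ E.map g := by
      rw [← whisker_exchange_assoc]
      simp
    have h3 : E.map (Q ◁ g) = Functor.OplaxMonoidal.δ E Q A ≫
        (E.obj Q ◁ E.map g) ≫ Functor.LaxMonoidal.μ E Q B := by
      rw [h1, Functor.Monoidal.δ_μ_assoc]
    simp only [u, Iso.trans_hom, Iso.trans_inv, Iso.symm_hom, Iso.symm_inv,
      Functor.Monoidal.μIso_hom, Functor.Monoidal.μIso_inv, whiskerRightIso_hom,
      whiskerRightIso_inv, Category.assoc]
    rw [h3, ← h2]
    simp only [Category.assoc]
  have keyR : ∀ {A B : C} (g : A ⟶ B),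
      E.map (g ▷ Q) = (v A).hom ≫ (E.map g ▷ Pd) ≫ (v B).inv := by
    intro A B g
    have h1 : E.map g ▷ E.obj Q ≫ Functor.LaxMonoidal.μ E B Q =
        Functor.LaxMonoidal.μ E A Q ≫ E.map (g ▷ Q) :=
      Functor.LaxMonoidal.μ_natural_left (F := E) g Q
    have h2 : (E.obj A ◁ e.hom) ≫ (E.map g ▷ Pd) ≫ (E.obj B ◁ e.inv) =
        E.map g ▷ E.obj Q := by
      rw [whisker_exchange_assoc]
      simp
    have h3 : E.map (g ▷ Q) = Functor.OplaxMonoidal.δ E A Q ≫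
        (E.map g ▷ E.obj Q) ≫ Functor.LaxMonoidal.μ E B Q := by
      rw [h1, Functor.Monoidal.δ_μ_assoc]
    simp only [v, Iso.trans_hom, Iso.trans_inv, Iso.symm_hom, Iso.symm_inv,
      Functor.Monoidal.μIso_hom, Functor.Monoidal.μIso_inv, whiskerLeftIso_hom,
      whiskerLeftIso_inv, Category.assoc]
    rw [h3, ← h2]
    simp only [Category.assoc]
  have hprojL : ∀ A : C, Projective (E.obj (Q ⊗ A)) := fun A =>
    Projective.of_iso (u A).symm (aux_projective_tensor_right hPdproj _)
  have hprojR : ∀ A : C, Projective (E.obj (A ⊗ Q)) := fun A =>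
    Projective.of_iso (v A).symm (aux_projective_tensor_left hPdproj _)
  refine ⟨Q, ?_, ?_⟩
  · intro A B g
    constructor
    · -- `Q ◁ g` is split
      have hfac : (Pd ◁ Abelian.factorThruImage (E.map g)) ≫ (Pd ◁ Abelian.image.ι (E.map g)) =
          Pd ◁ E.map g := by
        rw [← MonoidalCategory.whiskerLeft_comp, Abelian.image.fac]
      haveI : Epi (Pd ◁ Abelian.factorThruImage (E.map g)) := aux_epi_whiskerLeft _ _
      haveI : Mono (Pd ◁ Abelian.image.ι (E.map g)) := aux_mono_whiskerLeft _ _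
      obtain ⟨h, hh⟩ := aux_split (Pd ◁ Abelian.factorThruImage (E.map g))
        (Pd ◁ Abelian.image.ι (E.map g))
        (aux_projective_tensor_right hPdproj _) (aux_injective_tensor_right hPdinj _)
      rw [hfac] at hh
      obtain ⟨t, ht⟩ := hProjFull (Q ⊗ B) (Q ⊗ A) (hprojL B) (hprojL A)
        ((u B).hom ≫ h ≫ (u A).inv)
      have ht' : E.map t = (u B).hom ≫ h ≫ (u A).inv := ht
      refine ⟨t, ?_⟩
      apply E.map_injective
      rw [E.map_comp, E.map_comp, ht', keyL g]
      simp only [Category.assoc, Iso.inv_hom_id_assoc]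
      rw [reassoc_of% hh]
    · -- `g ▷ Q` is split
      have hfac : (Abelian.factorThruImage (E.map g) ▷ Pd) ≫ (Abelian.image.ι (E.map g) ▷ Pd) =
          E.map g ▷ Pd := by
        rw [← comp_whiskerRight, Abelian.image.fac]
      haveI : Epi (Abelian.factorThruImage (E.map g) ▷ Pd) := aux_epi_whiskerRight _ _
      haveI : Mono (Abelian.image.ι (E.map g) ▷ Pd) := aux_mono_whiskerRight _ _
      obtain ⟨h, hh⟩ := aux_split (Abelian.factorThruImage (E.map g) ▷ Pd)
        (Abelian.image.ι (E.map g) ▷ Pd)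
        (aux_projective_tensor_left hPdproj _) (aux_injective_tensor_left hPdinj _)
      rw [hfac] at hh
      obtain ⟨t, ht⟩ := hProjFull (B ⊗ Q) (A ⊗ Q) (hprojR B) (hprojR A)
        ((v B).hom ≫ h ≫ (v A).inv)
      have ht' : E.map t = (v B).hom ≫ h ≫ (v A).inv := ht
      refine ⟨t, ?_⟩
      apply E.map_injective
      rw [E.map_comp, E.map_comp, ht', keyR g]
      simp only [Category.assoc, Iso.inv_hom_id_assoc]
      rw [reassoc_of% hh]
  · -- `Q ◁ f ≠ 0`
    intro hQf
    have h0 : (0 : E.obj (Q ⊗ X) ⟶ E.obj (Q ⊗ Y)) =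
        (u X).hom ≫ (Pd ◁ E.map f) ≫ (u Y).inv := by
      rw [← keyL f, hQf, Functor.map_zero]
    have h1 : Pd ◁ E.map f = 0 := by
      calc Pd ◁ E.map f
          = (u X).inv ≫ ((u X).hom ≫ (Pd ◁ E.map f) ≫ (u Y).inv) ≫ (u Y).hom := by simp
        _ = 0 := by rw [← h0]; simp
    have h2 : 𝟙_ D ◁ E.map f ≫ η_ P₀ (P₀ᘁ) ▷ E.obj Y =
        η_ P₀ (P₀ᘁ) ▷ E.obj X ≫ (Pd ◁ E.map f) := whisker_exchange _ _
    rw [h1, comp_zero] at h2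
    haveI := aux_mono_whiskerRight (η_ P₀ (P₀ᘁ)) (E.obj Y)
    have h3 : 𝟙_ D ◁ E.map f = 0 := zero_of_comp_mono _ h2
    have h4 := MonoidalCategory.leftUnitor_naturality (E.map f)
    rw [h3, zero_comp] at h4
    have h5 : E.map f = 0 := by
      rw [← cancel_epi (λ_ (E.obj X)).hom, comp_zero]
      exact h4.symm
    exact hf (E.map_injective (by rw [h5, Functor.map_zero]))

end
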